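/- Let p be an odd prime and let P, Q, L be the p×p integer matrices defined by L_{i,j} = δ_{i,j+1}, Q_{i,j} = (−1)^{j+1}, and P_{i,j} = (−1)^j if i is odd and j > i, P_{i,j} = (−1)^{j+1} if i is even and j ≤ i, and P_{i,j} = 0 otherwise. Then the 2p×2p block matrix 2·[[I_p, P],[L − I_p, Q]] has Smith normal form over Z equal to the diagonal matrix with entries 2, 2, …, 2 (2p − 1 times) and 2p. -/

import Mathlib

open Matrix Finset

namespace SNFb

lemma Emul {n : Type*} [Fintype n] (a b c d : n → ℤ) :
    vecMulVec a b * vecMulVec c d = (b ⬝ᵥ c) • vecMulVec a d := by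
  ext i j
  simp only [Matrix.mul_apply, vecMulVec_apply, Matrix.smul_apply, smul_eq_mul, dotProduct,
    Finset.sum_mul]
  apply Finset.sum_congr rfl
  intros; ring

lemma Eadd {n : Type*} (a b c : n → ℤ) :
    vecMulVec (a + b) c = vecMulVec a c + vecMulVec b c := by
  ext i j; simp [vecMulVec_apply]; ring

lemma Eaddr {n : Type*} (a b c : n → ℤ) :
    vecMulVec a (b + c) = vecMulVec a b + vecMulVec a c := by
  ext i j; simp [vecMulVec_apply]; ring

lemma Esmulr {n : Type*} (k : ℤ) (a b : n → ℤ) :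
    vecMulVec a (k • b) = k • vecMulVec a b := by
  ext i j; simp [vecMulVec_apply]; ring

lemma Enegr {n : Type*} (a b : n → ℤ) :
    vecMulVec a (-b) = -vecMulVec a b := by
  ext i j; simp [vecMulVec_apply]

lemma abstract {n : Type*} [Fintype n] [DecidableEq n] (e z v : n → ℤ) (m : ℤ)
    (h1 : v ⬝ᵥ z = 1 - m) (h2 : v ⬝ᵥ e = -1) (h3 : e ⬝ᵥ z = 0) (h4 : e ⬝ᵥ e = 1) :
    (1 + (2:ℤ) • vecMulVec e v + (2:ℤ) • vecMulVec e e) * (1 - vecMulVec z e) *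
      (1 - (2:ℤ) • vecMulVec (z + e) v) * (1 + vecMulVec z e)
    = 1 + (2*m) • vecMulVec e e := by
  simp only [Eadd, mul_add, add_mul, mul_sub, sub_mul, mul_one, one_mul, smul_mul_assoc,
    mul_smul_comm, Emul, h1, h2, h3, h4, smul_smul, smul_add, smul_sub]
  module

lemma sumvz (n : ℕ) (hn : 2 ≤ n) :
    ∑ i ∈ Finset.range n, ((-1:ℤ)^i * (if i % 2 = 1 ∧ 2 ≤ i then 1 else 0))
      = 1 - (n/2 : ℕ) := by
  induction n, hn using Nat.le_induction with
  | base => decide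
  | succ n hn ih =>
    rw [Finset.sum_range_succ, ih]
    rcases Nat.even_or_odd n with he | ho
    · rw [if_neg (by rw [Nat.even_iff] at he; omega)]
      have : (n+1)/2 = n/2 := by rw [Nat.even_iff] at he; omega
      rw [this]; ring
    · rw [if_pos ⟨by rwa [← Nat.odd_iff], hn⟩, ho.neg_one_pow]
      have : (n+1)/2 = n/2 + 1 := by rw [Nat.odd_iff] at ho; omega
      rw [this]; push_cast; ring

lemma subL {n : Type*} [Fintype n] (M N : Matrix n n ℤ) (σ : Equiv.Perm n) :
    M.submatrix σ id * N = (M * N).submatrix σ id := by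
  ext i j; simp [Matrix.mul_apply]

lemma subR {n : Type*} [Fintype n] (M N : Matrix n n ℤ) (σ : Equiv.Perm n) :
    M * N.submatrix id σ = (M * N).submatrix id σ := by
  ext i j; simp [Matrix.mul_apply]

variable (p : ℕ)

def Pm : Matrix (Fin p) (Fin p) ℤ := Matrix.of fun i j =>
  if (i.val + 1) % 2 = 1 ∧ i.val < j.val then (-1 : ℤ) ^ (j.val + 1)
  else if (i.val + 1) % 2 = 0 ∧ j.val ≤ i.val then (-1 : ℤ) ^ (j.val + 1 + 1)
  else 0

def Qm : Matrix (Fin p) (Fin p) ℤ := Matrix.of fun _ j => (-1 : ℤ) ^ (j.val + 1 + 1)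

def Lm : Matrix (Fin p) (Fin p) ℤ := Matrix.of fun i j => if i.val = j.val + 1 then 1 else 0

def Sm : Matrix (Fin p) (Fin p) ℤ := Qm p - (Lm p - 1) * Pm p

def vv : Fin p → ℤ := fun j => (-1) ^ (j : ℕ)

def zz : Fin p → ℤ := fun i => if (i : ℕ) % 2 = 1 ∧ 2 ≤ (i : ℕ) then 1 else 0

def Dsgn : Matrix (Fin p) (Fin p) ℤ := Matrix.diagonal (fun i : Fin p => (-1:ℤ) ^ (i : ℕ))

variable (h1 : 1 < p)

def e1 : Fin p → ℤ := Pi.single ⟨1, h1⟩ 1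

def ww : Fin p → ℤ := zz p + e1 p h1

lemma ww_apply (i : Fin p) : ww p h1 i = if (i : ℕ) % 2 = 1 then 1 else 0 := by
  simp only [ww, zz, e1, Pi.add_apply, Pi.single_apply, Fin.ext_iff]
  split_ifs <;> omega

lemma LP_apply (i j : Fin p) : (Lm p * Pm p) i j =
    if h : (i : ℕ) = 0 then 0 else Pm p ⟨(i:ℕ) - 1, by omega⟩ j := by
  rw [Matrix.mul_apply]
  split_ifs with h
  · apply Finset.sum_eq_zero
    intro k _
    simp [Lm, h]
  · rw [Finset.sum_eq_single (⟨(i:ℕ) - 1, by have := i.isLt; omega⟩ : Fin p)]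
    · simp only [Lm, Matrix.of_apply]
      rw [if_pos (by omega), one_mul]
    · intro k _ hk
      simp only [Lm, Matrix.of_apply]
      rw [if_neg (by simp [Fin.ext_iff] at hk ⊢; omega), zero_mul]
    · intro hk; exact absurd (Finset.mem_univ _) hk

set_option maxHeartbeats 1000000 in
lemma Sform : Sm p = Dsgn p + (2:ℤ) • vecMulVec (ww p h1) (vv p) := by
  ext i j
  simp only [Sm, Dsgn, Matrix.sub_apply, Matrix.add_apply, Matrix.smul_apply, sub_mul, one_mul,
    Matrix.sub_apply, LP_apply, Matrix.diagonal_apply, vecMulVec_apply, ww_apply, vv,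
    smul_eq_mul, Qm, Matrix.of_apply]
  simp only [Pm, Matrix.of_apply, Fin.ext_iff]
  rcases Nat.even_or_odd (i:ℕ) with hi | hi <;>
    rcases Nat.even_or_odd (j:ℕ) with hj | hj <;>
  · have hi' := hi
    have hj' := hj
    first | rw [Nat.even_iff] at hi' | rw [Nat.odd_iff] at hi'
    first | rw [Nat.even_iff] at hj' | rw [Nat.odd_iff] at hj'
    first
      | rw [hj.neg_one_pow, (hj.add_one).neg_one_pow, ((hj.add_one).add_one).neg_one_pow]
      | rw [hj.neg_one_pow, (hj.add_one).neg_one_pow, ((hj.add_one).add_one).neg_one_pow]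
    first | rw [hi.neg_one_pow] | rw [hi.neg_one_pow]
    split_ifs <;> omega

lemma dot_vz (h2 : 2 ≤ p) : vv p ⬝ᵥ zz p = 1 - ((p/2 : ℕ) : ℤ) := by
  rw [dotProduct]
  have : ∀ i : Fin p, vv p i * zz p i
      = (fun k : ℕ => (-1:ℤ)^k * (if k % 2 = 1 ∧ 2 ≤ k then 1 else 0)) (i : ℕ) := by
    intro i; rfl
  rw [Finset.sum_congr rfl (fun i _ => this i),
    Fin.sum_univ_eq_sum_range (fun k : ℕ => (-1:ℤ)^k * (if k % 2 = 1 ∧ 2 ≤ k then 1 else 0))]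
  exact sumvz p h2

lemma dot_ve : vv p ⬝ᵥ e1 p h1 = -1 := by
  rw [e1, dotProduct_single, mul_one]; simp [vv]

lemma dot_ez : e1 p h1 ⬝ᵥ zz p = 0 := by
  rw [e1, single_dotProduct, one_mul]; simp [zz]

lemma dot_ee : e1 p h1 ⬝ᵥ e1 p h1 = 1 := by
  rw [e1, single_dotProduct, one_mul, Pi.single_eq_same]

lemma DSK : Dsgn p * Sm p = 1 - (2:ℤ) • vecMulVec (zz p + e1 p h1) (vv p) := by
  rw [Sform p h1, mul_add, Dsgn, diagonal_mul_diagonal]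
  have hd : (fun i : Fin p => (-1:ℤ)^(i:ℕ) * (-1:ℤ)^(i:ℕ)) = fun _ => 1 := by
    funext i; rw [← pow_add, Even.neg_one_pow ⟨(i:ℕ), rfl⟩]
  rw [hd, diagonal_one, mul_smul_comm]
  have hE : Matrix.diagonal (fun i : Fin p => (-1:ℤ)^(i:ℕ)) * vecMulVec (ww p h1) (vv p)
      = -vecMulVec (zz p + e1 p h1) (vv p) := by
    ext i j
    rw [Matrix.diagonal_mul]
    show (-1:ℤ)^(i:ℕ) * (vecMulVec (ww p h1) (vv p) i j) = _
    simp only [vecMulVec_apply, Matrix.neg_apply, ww_apply]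
    have : (zz p + e1 p h1) i = ww p h1 i := rfl
    rw [this, ww_apply]
    rcases Nat.even_or_odd (i:ℕ) with hi | hi
    · rw [hi.neg_one_pow, if_neg (by rw [Nat.even_iff] at hi; omega)]; ring
    · rw [hi.neg_one_pow, if_pos (by rwa [Nat.odd_iff] at hi)]; ring
  rw [hE]
  ext i j
  simp only [Matrix.add_apply, Matrix.sub_apply, Matrix.smul_apply, Matrix.neg_apply,
    smul_eq_mul]
  ring

lemma key : (1 + (2:ℤ) • vecMulVec (e1 p h1) (vv p) + (2:ℤ) • vecMulVec (e1 p h1) (e1 p h1))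
      * (1 - vecMulVec (zz p) (e1 p h1)) * Dsgn p * Sm p * (1 + vecMulVec (zz p) (e1 p h1))
    = 1 + (2 * ((p/2 : ℕ) : ℤ)) • vecMulVec (e1 p h1) (e1 p h1) := by
  have hre : (1 + (2:ℤ) • vecMulVec (e1 p h1) (vv p) + (2:ℤ) • vecMulVec (e1 p h1) (e1 p h1))
      * (1 - vecMulVec (zz p) (e1 p h1)) * Dsgn p * Sm p * (1 + vecMulVec (zz p) (e1 p h1))
    = (1 + (2:ℤ) • vecMulVec (e1 p h1) (vv p) + (2:ℤ) • vecMulVec (e1 p h1) (e1 p h1))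
      * (1 - vecMulVec (zz p) (e1 p h1)) * (Dsgn p * Sm p)
      * (1 + vecMulVec (zz p) (e1 p h1)) := by
    rw [mul_assoc ((1 + (2:ℤ) • vecMulVec (e1 p h1) (vv p) + (2:ℤ) • vecMulVec (e1 p h1) (e1 p h1))
      * (1 - vecMulVec (zz p) (e1 p h1)))]
  rw [hre, DSK p h1]
  exact abstract (e1 p h1) (zz p) (vv p) ((p/2 : ℕ) : ℤ)
    (dot_vz p (by omega)) (dot_ve p h1) (dot_ez p h1) (dot_ee p h1)


lemma fb_congr {n m : Type*} {A A' : Matrix n n ℤ} {B B' : Matrix n m ℤ}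
    {C C' : Matrix m n ℤ} {D D' : Matrix m m ℤ}
    (hA : A = A') (hB : B = B') (hC : C = C') (hD : D = D') :
    Matrix.fromBlocks A B C D = Matrix.fromBlocks A' B' C' D' := by
  rw [hA, hB, hC, hD]

lemma subLR {n : Type*} [Fintype n] (M N K : Matrix n n ℤ) (σ : Equiv.Perm n) :
    M.submatrix σ id * N * K.submatrix id σ = (M * N * K).submatrix σ σ := by
  ext i j
  simp only [Matrix.mul_apply, Matrix.submatrix_apply, id_eq, Finset.sum_mul]

lemma permdiag (h3 : 3 ≤ p) (hodd : p % 2 = 1) :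
    (1 + (2 * ((p/2:ℕ):ℤ)) • vecMulVec (e1 p (by omega)) (e1 p (by omega))).submatrix
      (Equiv.swap ⟨1, by omega⟩ ⟨p-1, by omega⟩) (Equiv.swap ⟨1, by omega⟩ ⟨p-1, by omega⟩)
    = Matrix.diagonal (fun c : Fin p => if c = ⟨p-1, by omega⟩ then (p:ℤ) else 1) := by
  have h1 : (1:ℕ) < p := by omega
  set i1 : Fin p := ⟨1, by omega⟩ with hi1
  set il : Fin p := ⟨p-1, by omega⟩ with hil
  set σ := Equiv.swap i1 il with hσ
  have hσ1 : ∀ a : Fin p, (σ a = i1) ↔ a = il := by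
    intro a
    rw [← Equiv.swap_apply_right i1 il]
    exact σ.injective.eq_iff
  ext i j
  simp only [Matrix.submatrix_apply, Matrix.add_apply, Matrix.one_apply, Matrix.smul_apply,
    vecMulVec_apply, e1, Pi.single_apply, Matrix.diagonal_apply, smul_eq_mul,
    σ.injective.eq_iff]
  simp only [← hi1, hσ1]
  by_cases hi : i = il <;> by_cases hj : j = il <;> by_cases hij : i = j <;>
    simp [hi, hj, hij] <;> push_cast <;> omega

lemma detA1 : IsUnit ((1 + (2:ℤ) • vecMulVec (e1 p h1) (vv p)
    + (2:ℤ) • vecMulVec (e1 p h1) (e1 p h1)).det) := by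
  have h : (1 + (2:ℤ) • vecMulVec (e1 p h1) (vv p) + (2:ℤ) • vecMulVec (e1 p h1) (e1 p h1))
      = 1 + vecMulVec (e1 p h1) ((2:ℤ) • (vv p + e1 p h1)) := by
    rw [Esmulr, Eaddr, smul_add, add_assoc]
  rw [h, vecMulVec_eq Unit, det_one_add_replicateCol_mul_replicateRow]
  have : ((2:ℤ) • (vv p + e1 p h1)) ⬝ᵥ e1 p h1 = 0 := by
    rw [e1, dotProduct_single, mul_one]
    simp [vv, e1, Pi.single_eq_same]
  rw [this]; simp

lemma detW : IsUnit ((1 - vecMulVec (zz p) (e1 p h1)).det) := by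
  have h : 1 - vecMulVec (zz p) (e1 p h1) = 1 + vecMulVec (zz p) (-(e1 p h1)) := by
    rw [Enegr, sub_eq_add_neg]
  rw [h, vecMulVec_eq Unit, det_one_add_replicateCol_mul_replicateRow, neg_dotProduct, dot_ez]
  simp

lemma detWi : IsUnit ((1 + vecMulVec (zz p) (e1 p h1)).det) := by
  rw [vecMulVec_eq Unit, det_one_add_replicateCol_mul_replicateRow, dot_ez]
  simp

lemma detDsgn : IsUnit ((Dsgn p).det) := by
  rw [Dsgn, det_diagonal, Finset.prod_pow_eq_pow_sum]
  exact (isUnit_one.neg).pow _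

end SNFb

set_option maxHeartbeats 3000000 in
theorem smith_normal_form_block_matrix (p : ℕ) (hp : p.Prime) (hodd : Odd p) :
    let P : Matrix (Fin p) (Fin p) ℤ := Matrix.of fun i j =>
      if (i.val + 1) % 2 = 1 ∧ i.val < j.val then (-1 : ℤ) ^ (j.val + 1)
      else if (i.val + 1) % 2 = 0 ∧ j.val ≤ i.val then (-1 : ℤ) ^ (j.val + 1 + 1)
      else 0
    let Q : Matrix (Fin p) (Fin p) ℤ := Matrix.of fun _ j => (-1 : ℤ) ^ (j.val + 1 + 1)
    let L : Matrix (Fin p) (Fin p) ℤ := Matrix.of fun i j =>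
      if i.val = j.val + 1 then 1 else 0
    let M : Matrix (Fin p ⊕ Fin p) (Fin p ⊕ Fin p) ℤ :=
      (2 : ℤ) • Matrix.fromBlocks 1 P (L - 1) Q
    ∃ U V : Matrix (Fin p ⊕ Fin p) (Fin p ⊕ Fin p) ℤ,
      IsUnit U.det ∧ IsUnit V.det ∧
      U * M * V = Matrix.diagonal (fun c =>
        if c = Sum.inr ⟨p - 1, Nat.sub_lt hp.pos one_pos⟩ then (2 * p : ℤ) else 2) := by
  intro P Q L M
  have hodd' : p % 2 = 1 := Nat.odd_iff.mp hodd
  have h3 : 3 ≤ p := by have h2 := hp.two_le; omega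
  have h1 : (1:ℕ) < p := by omega
  have hplt : p - 1 < p := by omega
  set il : Fin p := ⟨p-1, hplt⟩ with hil
  set σ : Equiv.Perm (Fin p) := Equiv.swap ⟨1, h1⟩ il with hσ
  set A1 : Matrix (Fin p) (Fin p) ℤ :=
    1 + (2:ℤ) • vecMulVec (SNFb.e1 p h1) (SNFb.vv p)
      + (2:ℤ) • vecMulVec (SNFb.e1 p h1) (SNFb.e1 p h1) with hA1
  set Wm : Matrix (Fin p) (Fin p) ℤ := 1 - vecMulVec (SNFb.zz p) (SNFb.e1 p h1) with hWm
  set Wi : Matrix (Fin p) (Fin p) ℤ := 1 + vecMulVec (SNFb.zz p) (SNFb.e1 p h1) with hWi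
  set At : Matrix (Fin p) (Fin p) ℤ := (A1 * Wm * SNFb.Dsgn p).submatrix σ id with hAt
  set Bt : Matrix (Fin p) (Fin p) ℤ := Wi.submatrix id σ with hBt
  refine ⟨Matrix.fromBlocks 1 0 0 At * Matrix.fromBlocks 1 0 (1 - L) 1,
          Matrix.fromBlocks 1 (-P) 0 1 * Matrix.fromBlocks 1 0 0 Bt, ?_, ?_, ?_⟩
  · rw [Matrix.det_mul, Matrix.det_fromBlocks_zero₂₁, Matrix.det_fromBlocks_zero₁₂]
    simp only [Matrix.det_one, one_mul, mul_one]
    rw [hAt, Matrix.det_permute, Matrix.det_mul, Matrix.det_mul]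
    exact ((Units.isUnit (Equiv.Perm.sign σ))).mul
      (((SNFb.detA1 p h1).mul (SNFb.detW p h1)).mul (SNFb.detDsgn p))
  · rw [Matrix.det_mul, Matrix.det_fromBlocks_zero₂₁, Matrix.det_fromBlocks_zero₂₁]
    simp only [Matrix.det_one, one_mul, mul_one]
    rw [hBt, Matrix.det_permute']
    exact (Units.isUnit (Equiv.Perm.sign σ)).mul (SNFb.detWi p h1)
  · have hP : P = SNFb.Pm p := rfl
    have hQ : Q = SNFb.Qm p := rfl
    have hL : L = SNFb.Lm p := rfl
    have hM : M = (2:ℤ) • Matrix.fromBlocks 1 (SNFb.Pm p) (SNFb.Lm p - 1) (SNFb.Qm p) := by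
      rw [show M = (2:ℤ) • Matrix.fromBlocks 1 P (L - 1) Q from rfl, hP, hQ, hL]
    rw [hM, hP, hL, mul_smul_comm, smul_mul_assoc]
    have hblocks : (Matrix.fromBlocks 1 0 0 At * Matrix.fromBlocks 1 0 (1 - SNFb.Lm p) 1) *
        Matrix.fromBlocks 1 (SNFb.Pm p) (SNFb.Lm p - 1) (SNFb.Qm p) *
        (Matrix.fromBlocks 1 (-(SNFb.Pm p)) 0 1 * Matrix.fromBlocks 1 0 0 Bt)
        = Matrix.fromBlocks 1 0 0 (At * SNFb.Sm p * Bt) := by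
      simp only [Matrix.fromBlocks_multiply, SNFb.Sm]
      exact SNFb.fb_congr (by noncomm_ring) (by noncomm_ring) (by noncomm_ring)
        (by noncomm_ring)
    rw [hblocks]
    have hABS : At * SNFb.Sm p * Bt
        = Matrix.diagonal (fun c : Fin p => if c = il then (p:ℤ) else 1) := by
      rw [hAt, hBt, SNFb.subLR, SNFb.key p h1]
      exact SNFb.permdiag p h1 h3 hodd'
    rw [hABS]
    ext (i|i) (j|j) <;>
      simp only [Matrix.smul_apply, Matrix.fromBlocks_apply₁₁, Matrix.fromBlocks_apply₁₂,
        Matrix.fromBlocks_apply₂₁, Matrix.fromBlocks_apply₂₂, Matrix.one_apply,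
        Matrix.diagonal_apply, Matrix.zero_apply, smul_eq_mul, Sum.inl.injEq, Sum.inr.injEq,
        reduceCtorEq, if_false, mul_zero, hil] <;>
      first | rfl | (split_ifs <;> simp)
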